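/- Every reversible factor of f^ω(0) has length at most 18; that is, if a word x and its reversal are both factors of f^ω(0), then |x| ≤ 18. -/
import Mathlib


/-- `x` is a (finite, contiguous) factor of the infinite word `w`. -/
def InfFactor {A : Type*} (x : List A) (w : ℕ → A) : Prop :=
  ∃ i : ℕ, x = (List.range x.length).map fun j => w (i + j)

/-- `z` is an undirected `r`-power: `z = x ++ y ++ x'` with `x` nonempty,
`x' = x` or `x' = x.reverse`, and `|x y x'| / |x y| = r`. -/
def IsUndirectedPow {A : Type*} (r : ℚ) (z : List A) : Prop :=
  ∃ x y x' : List A, z = x ++ y ++ x' ∧ x ≠ [] ∧ (x' = x ∨ x' = x.reverse) ∧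
    (z.length : ℚ) = r * ((x.length : ℚ) + (y.length : ℚ))

/-- `z` is an ordinary `r`-power: `z = x ++ y ++ x` with `x` nonempty and `|x y x| / |x y| = r`. -/
def IsOrdinaryPow {A : Type*} (r : ℚ) (z : List A) : Prop :=
  ∃ x y : List A, z = x ++ y ++ x ∧ x ≠ [] ∧
    (z.length : ℚ) = r * ((x.length : ℚ) + (y.length : ℚ))

/-- The infinite word `w` is undirected `α`-free: no factor of `w` is an undirected
`r`-power with rational `r ≥ α` (where `1 < r ≤ 2`). -/
def UndirectedFree {A : Type*} (α : ℝ) (w : ℕ → A) : Prop :=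
  ∀ z : List A, InfFactor z w →
    ∀ r : ℚ, 1 < r → r ≤ 2 → α ≤ (r : ℝ) → ¬ IsUndirectedPow r z

/-- The infinite word `w` is undirected `α⁺`-free: no factor of `w` is an undirected
`r`-power with rational `r > α` (where `1 < r ≤ 2`). -/
def UndirectedPlusFree {A : Type*} (α : ℝ) (w : ℕ → A) : Prop :=
  ∀ z : List A, InfFactor z w →
    ∀ r : ℚ, 1 < r → r ≤ 2 → α < (r : ℝ) → ¬ IsUndirectedPow r z

/-- The infinite word `w` is (ordinary) `α`-free. -/
def OrdinaryFree {A : Type*} (α : ℝ) (w : ℕ → A) : Prop :=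
  ∀ z : List A, InfFactor z w →
    ∀ r : ℚ, 1 < r → r ≤ 2 → α ≤ (r : ℝ) → ¬ IsOrdinaryPow r z

/-- The infinite word `w` is (ordinary) `α⁺`-free. -/
def OrdinaryPlusFree {A : Type*} (α : ℝ) (w : ℕ → A) : Prop :=
  ∀ z : List A, InfFactor z w →
    ∀ r : ℚ, 1 < r → r ≤ 2 → α < (r : ℝ) → ¬ IsOrdinaryPow r z

/-- The undirected repetition threshold for `k` letters: the infimum of the set of
rationals `r ∈ (1, 2]` such that undirected `r`-powers are `k`-avoidable. -/
noncomputable def URT (k : ℕ) : ℝ :=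
  sInf {a : ℝ | ∃ r : ℚ, a = (r : ℝ) ∧ 1 < r ∧ r ≤ 2 ∧
    ∃ w : ℕ → Fin k, UndirectedFree (r : ℝ) w}

/-- The (ordinary) repetition threshold for `k` letters. -/
noncomputable def RT (k : ℕ) : ℝ :=
  sInf {a : ℝ | ∃ r : ℚ, a = (r : ℝ) ∧ 1 < r ∧ r ≤ 2 ∧
    ∃ w : ℕ → Fin k, OrdinaryFree (r : ℝ) w}

/-- The 24-uniform morphism `f` on `{0,1,2}`:
`f(0) = 012021201021012102120210`, `f(1) = 120102012102120210201021`,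
`f(2) = 201210120210201021012102`. -/
def fMorph : Fin 3 → List (Fin 3)
  | 0 => [0,1,2,0,2,1,2,0,1,0,2,1,0,1,2,1,0,2,1,2,0,2,1,0]
  | 1 => [1,2,0,1,0,2,0,1,2,1,0,2,1,2,0,2,1,0,2,0,1,0,2,1]
  | 2 => [2,0,1,2,1,0,1,2,0,2,1,0,2,0,1,0,2,1,0,1,2,1,0,2]

/-- The infinite fixed point `f^ω(0)` of `fMorph` starting with `0`: its letter at
position `n` is the `(n mod 24)`-th letter of the image under `f` of its letter at
position `n / 24` (its prefix of length `24^n` is `f^n(0)` for every `n`). -/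
def fOmega : ℕ → Fin 3
  | 0 => 0
  | n + 1 => (fMorph (fOmega ((n + 1) / 24))).getD ((n + 1) % 24) 0
  decreasing_by exact Nat.div_lt_self (Nat.succ_pos n) (by norm_num)


lemma fMorph_len (a : Fin 3) : (fMorph a).length = 24 := by fin_cases a <;> rfl

lemma fOmega_step (n : ℕ) : fOmega n = (fMorph (fOmega (n/24))).getD (n%24) 0 := by
  cases n with
  | zero => rw [fOmega.eq_def]; norm_num [fOmega]; rfl
  | succ n => rw [fOmega]

lemma infFactor_iff {A : Type*} {x : List A} {w : ℕ → A} :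
    InfFactor x w ↔ ∃ i : ℕ, ∀ (j : ℕ) (h : j < x.length), x[j] = w (i + j) := by
  constructor
  · rintro ⟨i, hi⟩
    refine ⟨i, fun j h => ?_⟩
    rw [List.getElem_of_eq hi h, List.getElem_map, List.getElem_range]
  · rintro ⟨i, hi⟩
    refine ⟨i, List.ext_getElem (by simp) fun j h1 h2 => ?_⟩
    simpa using hi j h1

lemma infFactor_take {A : Type*} {x : List A} {w : ℕ → A} (n : ℕ) (hx : InfFactor x w) :
    InfFactor (x.take n) w := by
  rw [infFactor_iff] at hx ⊢
  obtain ⟨i, hi⟩ := hx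
  refine ⟨i, fun j h => ?_⟩
  rw [List.getElem_take]
  exact hi j (by simp at h; omega)

lemma infFactor_drop {A : Type*} {x : List A} {w : ℕ → A} (n : ℕ) (hx : InfFactor x w) :
    InfFactor (x.drop n) w := by
  rw [infFactor_iff] at hx ⊢
  obtain ⟨i, hi⟩ := hx
  refine ⟨i + n, fun j h => ?_⟩
  rw [List.getElem_drop]
  rw [show i + n + j = i + (n + j) by omega]
  exact hi (n + j) (by simp at h; omega)

lemma factor19 (x : List (Fin 3)) (hx : InfFactor x fOmega) (hl : x.length = 19) :
    ∃ a b : Fin 3, ∃ r : Fin 30, x = ((fMorph a ++ fMorph b).drop r.val).take 19 := by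
  rw [infFactor_iff] at hx
  obtain ⟨i, hi⟩ := hx
  set q := i / 24 with hq
  set r := i % 24 with hr
  have hr24 : r < 24 := Nat.mod_lt _ (by norm_num)
  refine ⟨fOmega q, fOmega (q + 1), ⟨r, by omega⟩, ?_⟩
  apply List.ext_getElem
  · simp [fMorph_len, hl]; omega
  · intro j h1 h2
    rw [List.getElem_take, List.getElem_drop]
    simp only [Fin.val_mk] at h2 ⊢
    rw [hi j h1]
    rw [hl] at h1
    rcases lt_or_ge (r + j) 24 with hc | hc
    · rw [List.getElem_append_left (by rw [fMorph_len]; omega)]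
      rw [fOmega_step (i + j)]
      have h3 : (i + j) / 24 = q := by omega
      have h4 : (i + j) % 24 = r + j := by omega
      rw [h3, h4, List.getD_eq_getElem _ _ (by rw [fMorph_len]; omega)]
    · rw [List.getElem_append_right (by rw [fMorph_len]; omega)]
      rw [fOmega_step (i + j)]
      have h3 : (i + j) / 24 = q + 1 := by omega
      have h4 : (i + j) % 24 = r + j - 24 := by omega
      rw [h3, h4, List.getD_eq_getElem _ _ (by rw [fMorph_len]; omega)]
      congr 1
      rw [fMorph_len]

set_option maxHeartbeats 2000000 in
lemma nopal : ∀ a b a' b' : Fin 3, ∀ r r' : Fin 30,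
    ((fMorph a ++ fMorph b).drop r.val).take 19 ≠
      (((fMorph a' ++ fMorph b').drop r'.val).take 19).reverse := by decide

/-- Every reversible factor of `f^ω(0)` has length at most 18: if a word `x` and its
reversal are both factors of `f^ω(0)`, then `|x| ≤ 18`. -/
theorem fOmega_reversible_factor_length_le (x : List (Fin 3))
    (hx : InfFactor x fOmega) (hxr : InfFactor x.reverse fOmega) :
    x.length ≤ 18 := by
  by_contra h
  push_neg at h
  set y := x.take 19 with hy
  have hyl : y.length = 19 := by simp [hy]; omega
  have hyf : InfFactor y fOmega := infFactor_take 19 hx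
  have hyrev : y.reverse = x.reverse.drop (x.length - 19) := by
    rw [hy, List.reverse_take]
  have hyr : InfFactor y.reverse fOmega := by
    rw [hyrev, ← List.length_reverse]
    exact infFactor_drop _ hxr
  obtain ⟨a, b, r, hw⟩ := factor19 y hyf hyl
  obtain ⟨a', b', r', hw'⟩ := factor19 y.reverse hyr (by simp [hyl])
  exact nopal a' b' a b r' r (by rw [← hw, ← hw'])
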